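/- For 0 < r ≤ 1/2, real n, real s with |s − n| ≥ 1, and b > 0, the integral ∫_{-b}^{b} e^{i(s−n)x} sin(r x)/x dx is bounded in absolute value by (4/b)·(1/(|s−n|+r) + 1/(|s−n|−r)) + π (in fact the sine part equals a difference of two sine-integral tails each bounded using |∫_x^∞ e^{iat}/t dt| ≤ 2/(a x)). -/

import Mathlib

open Filter Real Complex MeasureTheory

lemma gInt (u v : ℝ) : IntervalIntegrable (fun t => Real.sin t / t) volume u v := by
  apply (_root_.intervalIntegrable_const (c := (1:ℝ))).mono_fun
  · exact (Real.measurable_sin.div measurable_id).aestronglyMeasurable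
  · refine Filter.Eventually.of_forall fun x => ?_
    simp only [Real.norm_eq_abs, norm_one]
    rcases eq_or_ne x 0 with h | h
    · simp [h]
    · rw [abs_div, div_le_one (abs_pos.2 h)]
      exact Real.abs_sin_le_abs

-- change of variables for sin(cx)/x
lemma comp_lem (c b : ℝ) (hc : 0 < c) :
    (∫ x in (-b)..b, Real.sin (c * x) / x) = ∫ t in (-(c*b))..(c*b), Real.sin t / t := by
  have h : ∀ x : ℝ, Real.sin (c * x) / x = c * ((fun t => Real.sin t / t) (c * x)) := by
    intro x
    rcases eq_or_ne x 0 with h | h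
    · simp [h]
    · field_simp
  simp_rw [h]
  rw [intervalIntegral.integral_const_mul]
  have := intervalIntegral.integral_comp_mul_left (a := -b) (b := b)
    (f := fun t => Real.sin t / t) hc.ne'
  rw [this, smul_eq_mul, ← mul_assoc, mul_inv_cancel₀ hc.ne', one_mul, mul_neg]

lemma g2Int (c u v : ℝ) : IntervalIntegrable (fun x => Real.sin (c * x) / x) volume u v := by
  apply (_root_.intervalIntegrable_const (c := |c|)).mono_fun
  · exact ((Real.measurable_sin.comp (measurable_const_mul c)).div measurable_id).aestronglyMeasurable
  · refine Filter.Eventually.of_forall fun x => ?_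
    simp only [Real.norm_eq_abs, abs_abs]
    rcases eq_or_ne x 0 with h | h
    · simp [h]
    · rw [abs_div, div_le_iff₀ (abs_pos.2 h)]
      calc |Real.sin (c * x)| ≤ |c * x| := Real.abs_sin_le_abs
        _ = |c| * |x| := abs_mul _ _

lemma key (r a b : ℝ) (hr : 0 < r) (hr2 : r ≤ 1/2) (ha : 1 ≤ a) (hb : 0 < b) :
    |∫ x in (-b)..b, Real.cos (a * x) * (Real.sin (r * x) / x)| ≤ 2 := by
  set u := (a - r) * b with hu_def
  set v := (a + r) * b with hv_def
  have har : (0:ℝ) < a - r := by linarith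
  have hu : 0 < u := mul_pos har hb
  have huv : u ≤ v := by
    apply mul_le_mul_of_nonneg_right (by linarith) hb.le
  have hid : ∀ x : ℝ, Real.cos (a*x) * (Real.sin (r*x)/x)
      = (Real.sin ((a+r)*x)/x - Real.sin ((a-r)*x)/x) / 2 := by
    intro x
    rcases eq_or_ne x 0 with h | h
    · simp [h]
    · rw [show (a+r)*x = a*x + r*x by ring, show (a-r)*x = a*x - r*x by ring,
        Real.sin_add, Real.sin_sub]
      field_simp
      ring
  simp_rw [hid]
  rw [intervalIntegral.integral_div, intervalIntegral.integral_sub (g2Int _ _ _) (g2Int _ _ _),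
    comp_lem _ _ (by linarith : (0:ℝ) < a + r), comp_lem _ _ har, ← hu_def, ← hv_def]
  -- now goal : |(∫ t in -v..v, sin t/t - ∫ t in -u..u, sin t/t) / 2| ≤ 2
  have hneg : (∫ t in (-v)..(-u), Real.sin t / t) = ∫ t in u..v, Real.sin t / t := by
    have h := intervalIntegral.integral_comp_neg (a := u) (b := v)
      (f := fun t => Real.sin t / t)
    simp only [Real.sin_neg, neg_div_neg_eq] at h
    exact h.symm
  have h1 : (∫ t in (-v)..(-u), Real.sin t / t) + ∫ t in (-u)..v, Real.sin t / t
      = ∫ t in (-v)..v, Real.sin t / t :=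
    intervalIntegral.integral_add_adjacent_intervals (gInt _ _) (gInt _ _)
  have h2 : (∫ t in (-u)..u, Real.sin t / t) + ∫ t in u..v, Real.sin t / t
      = ∫ t in (-u)..v, Real.sin t / t :=
    intervalIntegral.integral_add_adjacent_intervals (gInt _ _) (gInt _ _)
  have hdiff : (∫ t in (-v)..v, Real.sin t / t) - ∫ t in (-u)..u, Real.sin t / t
      = 2 * ∫ t in u..v, Real.sin t / t := by
    rw [← h1, hneg] at *
    linarith
  rw [hdiff]
  have hbound : |∫ t in u..v, Real.sin t / t| ≤ (1/u) * |v - u| := by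
    rw [← Real.norm_eq_abs]
    apply intervalIntegral.norm_integral_le_of_norm_le_const
    intro x hx
    rw [Set.uIoc_of_le huv] at hx
    have hux : u < x := hx.1
    rw [Real.norm_eq_abs, abs_div, abs_of_pos (hu.trans hux)]
    exact div_le_div₀ (by norm_num) (Real.abs_sin_le_one x) hu hux.le
  have hvu : v - u = 2 * r * b := by rw [hu_def, hv_def]; ring
  rw [show (2:ℝ) * (∫ t in u..v, Real.sin t / t) / 2 = ∫ t in u..v, Real.sin t / t by ring]
  have h3 : (1/u) * |v - u| ≤ 2 := by
    rw [_root_.abs_of_nonneg (by linarith : (0:ℝ) ≤ v - u), hvu, hu_def]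
    rw [div_mul_eq_mul_div, one_mul, div_le_iff₀ (mul_pos har hb)]
    nlinarith
  linarith [hbound]

lemma fInt (c r b : ℝ) : IntervalIntegrable
    (fun x => Complex.exp (((c * x : ℝ) : ℂ) * Complex.I) * ((Real.sin (r * x) / x : ℝ) : ℂ))
    volume (-b) b := by
  apply (_root_.intervalIntegrable_const (c := |r|)).mono_fun
  · apply Measurable.aestronglyMeasurable
    fun_prop
  · refine Filter.Eventually.of_forall fun x => ?_
    simp only []
    rw [norm_mul, Complex.norm_exp_ofReal_mul_I, one_mul,
      Complex.norm_real, Real.norm_eq_abs, Real.norm_eq_abs, _root_.abs_abs]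
    rcases eq_or_ne x 0 with h | h
    · simp [h]
    · rw [abs_div, div_le_iff₀ (abs_pos.2 h)]
      calc |Real.sin (r * x)| ≤ |r * x| := Real.abs_sin_le_abs
        _ = |r| * |x| := abs_mul _ _

lemma main_red (c r b : ℝ) :
    (∫ x in (-b)..b, Complex.exp (((c * x : ℝ) : ℂ) * Complex.I) * ((Real.sin (r * x) / x : ℝ) : ℂ))
      = ((∫ x in (-b)..b, Real.cos (c * x) * (Real.sin (r * x) / x) : ℝ) : ℂ) := by
  set f : ℝ → ℂ := fun x =>
    Complex.exp (((c * x : ℝ) : ℂ) * Complex.I) * ((Real.sin (r * x) / x : ℝ) : ℂ) with hf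
  have hfneg : ∀ x, f (-x)
      = Complex.exp ((((-c) * x : ℝ) : ℂ) * Complex.I) * ((Real.sin (r * x) / x : ℝ) : ℂ) := by
    intro x
    simp only [hf, mul_neg, Real.sin_neg, neg_div_neg_eq, neg_mul]
  have hsymm : (∫ x in (-b)..b, f (-x)) = ∫ x in (-b)..b, f x := by
    rw [intervalIntegral.integral_comp_neg, neg_neg]
  have hInt1 : IntervalIntegrable f volume (-b) b := fInt c r b
  have hInt2 : IntervalIntegrable (fun x => f (-x)) volume (-b) b := by
    simp_rw [hfneg]; exact fInt (-c) r b
  have hcos : ∀ x, f x + f (-x) = 2 * ((Real.cos (c * x) * (Real.sin (r * x) / x) : ℝ) : ℂ) := by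
    intro x
    rw [hfneg]
    simp only [hf]
    push_cast
    rw [Complex.exp_mul_I, Complex.exp_mul_I]
    rw [show ((-c : ℂ) * x) = -(c * x) by ring, Complex.cos_neg, Complex.sin_neg]
    ring
  have h2I : (∫ x in (-b)..b, f x) + ∫ x in (-b)..b, f x =
      2 * ((∫ x in (-b)..b, Real.cos (c * x) * (Real.sin (r * x) / x) : ℝ) : ℂ) := by
    nth_rewrite 2 [← hsymm]
    rw [← intervalIntegral.integral_add hInt1 hInt2]
    simp_rw [hcos]
    rw [intervalIntegral.integral_const_mul, intervalIntegral.integral_ofReal]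
  rw [← two_mul] at h2I
  exact mul_left_cancel₀ two_ne_zero h2I

theorem stmt8 (r n s b : ℝ) (hr : 0 < r) (hr2 : r ≤ 1 / 2) (hsn : 1 ≤ |s - n|) (hb : 0 < b) :
    ‖∫ x in (-b)..b, Complex.exp ((((s - n) * x : ℝ) : ℂ) * Complex.I) * ((Real.sin (r * x) / x : ℝ) : ℂ)‖ ≤
      (4 / b) * (1 / (|s - n| + r) + 1 / (|s - n| - r)) + π := by
  rw [main_red, Complex.norm_real, Real.norm_eq_abs]
  have hcos : ∀ x : ℝ, Real.cos ((s - n) * x) = Real.cos (|s - n| * x) := by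
    intro x
    rcases abs_cases (s - n) with ⟨h, _⟩ | ⟨h, _⟩
    · rw [h]
    · rw [h, neg_mul, Real.cos_neg]
  simp_rw [hcos]
  have hkey := key r |s - n| b hr hr2 hsn hb
  have h1 : (0:ℝ) < |s - n| + r := by linarith
  have h2 : (0:ℝ) < |s - n| - r := by linarith
  have h3 : (0:ℝ) ≤ 4 / b * (1 / (|s - n| + r) + 1 / (|s - n| - r)) := by positivity
  have h4 : (2:ℝ) ≤ π := by linarith [Real.pi_gt_three]
  linarith
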